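/- arXiv:1706.05803 — 3 statements merged into one kernel-verified Lean document; each statement's English description precedes it below -/
import Mathlib

section
/- Let Φ be an even Schwartz function on ℝ satisfying the Tauberian condition |Φ(λ)| > 0 on {ε/2 < |λ| < 2ε} for some ε > 0. Then there exist even Schwartz functions Ψ, Υ, Θ on ℝ such that supp Υ ⊂ {|λ| ≤ 2ε}, supp Θ ⊂ {ε/2 ≤ |λ| ≤ 2ε}, and Ψ(λ)Υ(λ) + Σ_{k=1}^∞ Φ(2^{-k}λ) Θ(2^{-k}λ) = 1 for all λ ∈ ℝ. -/
lemma toSchwartz_aux (f : ℝ → ℝ) (h1 : ContDiff ℝ ((⊤ : ℕ∞) : WithTop ℕ∞) f)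
    (h2 : HasCompactSupport f) :
    ∃ g : SchwartzMap ℝ ℝ, ∀ x, g x = f x := by
  refine ⟨⟨f, h1, fun k n => ?_⟩, fun x => rfl⟩
  have hs : HasCompactSupport (fun x : ℝ => ‖x‖ ^ k • iteratedFDeriv ℝ n f x) := by
    apply (h2.iteratedFDeriv (𝕜 := ℝ) n).mono'
    intro x hx
    apply subset_closure
    simp only [Function.mem_support, ne_eq] at *
    intro h
    exact hx (by simp [h])
  have hc : Continuous (fun x : ℝ => ‖x‖ ^ k • iteratedFDeriv ℝ n f x) :=
    (continuous_norm.pow k).smul (h1.continuous_iteratedFDeriv (by exact_mod_cast le_top))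
  obtain ⟨C, hC⟩ := hs.exists_bound_of_continuous hc
  refine ⟨C, fun x => ?_⟩
  have := hC x
  rw [norm_smul (‖x‖ ^ k) (iteratedFDeriv ℝ n f x), norm_pow, norm_norm] at this
  exact this

/-- Calderón-type reproducing decomposition. Given an even Schwartz
function `Φ` satisfying the Tauberian condition on `{ε/2 < |λ| < 2ε}`, there are
even Schwartz functions `Ψ, Υ, Θ` with `supp Υ ⊆ {|λ| ≤ 2ε}`,
`supp Θ ⊆ {ε/2 ≤ |λ| ≤ 2ε}` and
`Ψ(λ)Υ(λ) + ∑_{k=1}^∞ Φ(2^{-k}λ)Θ(2^{-k}λ) = 1` for all `λ`. -/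
theorem stmt_5 (Φ : SchwartzMap ℝ ℝ) (hΦeven : ∀ x : ℝ, Φ (-x) = Φ x)
    (ε : ℝ) (hε : 0 < ε)
    (htaub : ∀ l : ℝ, ε / 2 < |l| → |l| < 2 * ε → Φ l ≠ 0) :
    ∃ Ψ Υ Θ : SchwartzMap ℝ ℝ,
      (∀ x : ℝ, Ψ (-x) = Ψ x) ∧ (∀ x : ℝ, Υ (-x) = Υ x) ∧ (∀ x : ℝ, Θ (-x) = Θ x) ∧
      (∀ l : ℝ, 2 * ε < |l| → Υ l = 0) ∧
      (∀ l : ℝ, |l| < ε / 2 ∨ 2 * ε < |l| → Θ l = 0) ∧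
      (∀ l : ℝ,
        Ψ l * Υ l
          + ∑' k : ℕ, Φ ((2 : ℝ) ^ (-((k : ℤ) + 1)) * l) * Θ ((2 : ℝ) ^ (-((k : ℤ) + 1)) * l)
        = 1) := by
  -- bump functions
  set χb : ContDiffBump (0 : ℝ) :=
    ⟨5 * ε / 4, 7 * ε / 4, by linarith, by linarith⟩ with hχb
  set ψb : ContDiffBump (0 : ℝ) :=
    ⟨7 * ε / 4, 2 * ε, by linarith, by linarith⟩ with hψb
  have hχ1 : ∀ l : ℝ, |l| ≤ 5 * ε / 4 → χb l = 1 := by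
    intro l hl
    exact χb.one_of_mem_closedBall (by simpa [Real.dist_eq] using hl)
  have hχ0 : ∀ l : ℝ, 7 * ε / 4 ≤ |l| → χb l = 0 := by
    intro l hl
    exact χb.zero_of_le_dist (by simpa [Real.dist_eq] using hl)
  have hψ1 : ∀ l : ℝ, |l| ≤ 7 * ε / 4 → ψb l = 1 := by
    intro l hl
    exact ψb.one_of_mem_closedBall (by simpa [Real.dist_eq] using hl)
  -- the annular piece
  set η : ℝ → ℝ := fun l => χb l - χb (2 * l) with hη
  have hη0 : ∀ l : ℝ, |l| ≤ 5 * ε / 8 ∨ 7 * ε / 4 ≤ |l| → η l = 0 := by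
    intro l hl
    rcases hl with h | h
    · have h1 : χb l = 1 := hχ1 l (by linarith)
      have h2 : χb (2 * l) = 1 := hχ1 _ (by rw [abs_mul]; simp [abs_of_nonneg]; linarith)
      simp [hη, h1, h2]
    · have h1 : χb l = 0 := hχ0 l h
      have h2 : χb (2 * l) = 0 := by
        apply hχ0
        rw [abs_mul]
        have : |(2:ℝ)| = 2 := by norm_num
        rw [this]; linarith
      simp [hη, h1, h2]
  have hηsupp : ∀ l : ℝ, η l ≠ 0 → 5 * ε / 8 < |l| ∧ |l| < 7 * ε / 4 := by
    intro l hl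
    constructor
    · by_contra h; exact hl (hη0 l (Or.inl (by linarith [not_lt.mp h])))
    · by_contra h; exact hl (hη0 l (Or.inr (by linarith [not_lt.mp h])))
  have hΦne : ∀ l : ℝ, η l ≠ 0 → Φ l ≠ 0 := by
    intro l hl
    obtain ⟨h1, h2⟩ := hηsupp l hl
    exact htaub l (by linarith) (by linarith)
  have hηeven : ∀ x : ℝ, η (-x) = η x := by
    intro x
    simp only [hη]
    rw [χb.neg, mul_neg, χb.neg]
  have hηcd : ContDiff ℝ ((⊤ : ℕ∞) : WithTop ℕ∞) η :=
    χb.contDiff.sub (χb.contDiff.comp (contDiff_const.mul contDiff_id))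
  -- the quotient
  set θf : ℝ → ℝ := fun l => η l / Φ l with hθf
  have hθ0 : ∀ l : ℝ, η l = 0 → θf l = 0 := by
    intro l hl; simp [hθf, hl]
  have hθcd : ContDiff ℝ ((⊤ : ℕ∞) : WithTop ℕ∞) θf := by
    rw [contDiff_iff_contDiffAt]
    intro x
    by_cases hx : Φ x = 0
    · have hxV : |x| < 5 * ε / 8 ∨ 7 * ε / 4 < |x| := by
        by_contra h
        push_neg at h
        obtain ⟨h1, h2⟩ := h
        have hx1 : ε / 2 < |x| := by linarith
        have hx2 : |x| < 2 * ε := by linarith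
        exact htaub x hx1 hx2 hx
      have hev : ∀ᶠ l in nhds x, θf l = 0 := by
        rcases hxV with h | h
        · have hmem : {l : ℝ | |l| < 5 * ε / 8} ∈ nhds x :=
            (isOpen_Iio.preimage continuous_abs).mem_nhds h
          filter_upwards [hmem] with l hl
          exact hθ0 l (hη0 l (Or.inl (le_of_lt hl)))
        · have hmem : {l : ℝ | 7 * ε / 4 < |l|} ∈ nhds x :=
            (isOpen_Ioi.preimage continuous_abs).mem_nhds h
          filter_upwards [hmem] with l hl
          exact hθ0 l (hη0 l (Or.inr (le_of_lt hl)))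
      exact contDiffAt_const.congr_of_eventuallyEq hev
    · exact hηcd.contDiffAt.div (Φ.smooth').contDiffAt hx
  have hθcs : HasCompactSupport θf := by
    apply HasCompactSupport.intro (isCompact_closedBall (0:ℝ) (7 * ε / 4))
    intro x hx
    simp only [Metric.mem_closedBall, Real.dist_eq, sub_zero, not_le] at hx
    exact hθ0 x (hη0 x (Or.inr (le_of_lt hx)))
  obtain ⟨Θ, hΘ⟩ := toSchwartz_aux θf hθcd hθcs
  obtain ⟨Υ, hΥ⟩ := toSchwartz_aux (fun l => χb l) χb.contDiff χb.hasCompactSupport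
  obtain ⟨Ψ, hΨ⟩ := toSchwartz_aux (fun l => ψb l) ψb.contDiff ψb.hasCompactSupport
  have hkey : ∀ l : ℝ, Φ l * Θ l = η l := by
    intro l
    rw [hΘ]
    by_cases hl : η l = 0
    · rw [hθ0 l hl, hl, mul_zero]
    · have hΦl := hΦne l hl
      rw [hθf]
      field_simp
  refine ⟨Ψ, Υ, Θ, ?_, ?_, ?_, ?_, ?_, ?_⟩
  · intro x; rw [hΨ, hΨ]; exact ψb.neg x
  · intro x; rw [hΥ, hΥ]; exact χb.neg x
  · intro x
    rw [hΘ, hΘ, hθf]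
    simp only
    rw [hηeven, hΦeven]
  · intro l hl
    rw [hΥ]
    exact hχ0 l (by linarith)
  · intro l hl
    rw [hΘ]
    rcases hl with h | h
    · exact hθ0 l (hη0 l (Or.inl (by linarith)))
    · exact hθ0 l (hη0 l (Or.inr (by linarith)))
  · intro l
    set g : ℕ → ℝ := fun k => χb ((2 : ℝ) ^ (-(k : ℤ)) * l) with hg
    have hterm : ∀ k : ℕ,
        Φ ((2 : ℝ) ^ (-((k : ℤ) + 1)) * l) * Θ ((2 : ℝ) ^ (-((k : ℤ) + 1)) * l)
          = g (k + 1) - g k := by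
      intro k
      rw [hkey]
      have h2 : (2 : ℝ) * ((2 : ℝ) ^ (-((k : ℤ) + 1)) * l) = (2 : ℝ) ^ (-(k : ℤ)) * l := by
        rw [← mul_assoc, ← zpow_one_add₀ (two_ne_zero)]
        ring_nf
      simp only [hη, hg, h2]
      have h3 : (-((k : ℤ) + 1)) = (-(((k:ℕ) + 1 : ℕ) : ℤ)) := by push_cast; ring
      rw [h3]
    -- choose N beyond which everything is 1
    obtain ⟨N, hN⟩ := pow_unbounded_of_one_lt (|l| / (5 * ε / 8)) (one_lt_two (α := ℝ))
    have habs : |l| < 2 ^ N * (5 * ε / 8) := by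
      rw [div_lt_iff₀ (by linarith)] at hN
      linarith
    have hg1 : ∀ k : ℕ, N ≤ k → g k = 1 := by
      intro k hk
      apply hχ1
      rw [abs_mul]
      have hp : |(2 : ℝ) ^ (-(k : ℤ))| = ((2:ℝ) ^ k)⁻¹ := by
        rw [abs_of_pos (zpow_pos (by norm_num) _), zpow_neg, zpow_natCast]
      rw [hp]
      have h2k : (2:ℝ) ^ N ≤ 2 ^ k := pow_le_pow_right₀ (by norm_num) hk
      have hpos : (0:ℝ) < 2 ^ k := by positivity
      rw [inv_mul_le_iff₀ hpos]
      refine le_of_lt ?_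
      calc |l| < 2 ^ N * (5 * ε / 8) := habs
        _ ≤ 2 ^ k * (5 * ε / 8) := by nlinarith
        _ ≤ 2 ^ k * (5 * ε / 4) := by nlinarith
    have hzero : ∀ k ∉ Finset.range N,
        Φ ((2 : ℝ) ^ (-((k : ℤ) + 1)) * l) * Θ ((2 : ℝ) ^ (-((k : ℤ) + 1)) * l) = 0 := by
      intro k hk
      rw [Finset.mem_range, not_lt] at hk
      rw [hterm, hg1 k hk, hg1 (k+1) (by omega), sub_self]
    rw [tsum_eq_sum hzero]
    have hsum : ∑ k ∈ Finset.range N,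
        Φ ((2 : ℝ) ^ (-((k : ℤ) + 1)) * l) * Θ ((2 : ℝ) ^ (-((k : ℤ) + 1)) * l)
        = g N - g 0 := by
      rw [Finset.sum_congr rfl (fun k _ => hterm k)]
      exact Finset.sum_range_sub g N
    rw [hsum]
    have hgN : g N = 1 := hg1 N le_rfl
    have hg0 : g 0 = χb l := by simp [hg]
    have hΨχ : Ψ l * Υ l = χb l := by
      rw [hΨ, hΥ]
      by_cases hl0 : χb l = 0
      · simp [hl0]
      · have : l ∈ Function.support χb := hl0
        rw [χb.support_eq, Metric.mem_ball, Real.dist_eq, sub_zero] at this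
        rw [hψ1 l (le_of_lt this), one_mul]
    rw [hΨχ, hgN, hg0]
    ring
end

section
/- Let (X, ρ, μ) be a space of homogeneous type with μ(X) = ∞, and let L be a non-negative self-adjoint operator on L²(X, dμ) whose heat kernel p_t(x,y) satisfies the Gaussian upper bound |p_t(x,y)| ≤ C V(x,√t)^{-1} exp(−ρ(x,y)²/(ct)). Then the spectral measure of L assigns measure zero to the set {0}; that is, the spectral projection E({0}) = 0. -/
open MeasureTheory Metric Real Filter
open scoped ENNReal NNReal


lemma aux_sum (n a : ℝ) (ha : 0 < a) :
    Summable (fun k : ℕ => ((2:ℝ)^(k+1)) ^ n * Real.exp (-(4^k) * a)) := by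
  apply summable_of_ratio_norm_eventually_le (r := 1/2) (by norm_num)
  have hrat : Tendsto (fun k : ℕ => (2:ℝ)^n * Real.exp (-(3 * 4^k) * a)) atTop (nhds 0) := by
    have h4 : Tendsto (fun k : ℕ => -(3 * (4:ℝ)^k) * a) atTop atBot := by
      apply Tendsto.atBot_mul_const ha
      apply tendsto_neg_atTop_atBot.comp
      exact (tendsto_pow_atTop_atTop_of_one_lt (by norm_num : (1:ℝ) < 4)).const_mul_atTop (by norm_num)
    simpa using (Real.tendsto_exp_atBot.comp h4).const_mul ((2:ℝ)^n)
  filter_upwards [hrat.eventually (gt_mem_nhds (by norm_num : (0:ℝ) < 1/2))] with k hk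
  have h2 : ((2:ℝ)^(k+1+1)) ^ n = ((2:ℝ)^(k+1)) ^ n * (2:ℝ)^n := by
    rw [pow_succ, Real.mul_rpow (by positivity) (by norm_num)]
  have h3 : Real.exp (-(4^(k+1)) * a) = Real.exp (-(4^k) * a) * Real.exp (-(3*4^k) * a) := by
    rw [← Real.exp_add]; ring_nf
  have hpos : 0 ≤ (2:ℝ)^n * Real.exp (-(3 * 4^k) * a) := by positivity
  calc ‖((2:ℝ)^(k+1+1)) ^ n * Real.exp (-(4^(k+1)) * a)‖
      = ((2:ℝ)^n * Real.exp (-(3*4^k) * a)) * ‖((2:ℝ)^(k+1)) ^ n * Real.exp (-(4^k) * a)‖ := by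
        rw [h2, h3, norm_mul, norm_mul, norm_mul]
        simp [Real.norm_eq_abs, abs_of_nonneg (Real.exp_pos _).le, abs_of_nonneg (by positivity : (0:ℝ) ≤ ((2:ℝ)^(k+1))^n), abs_of_nonneg (by positivity : (0:ℝ) ≤ (2:ℝ)^n)]
        ring
    _ ≤ 1/2 * ‖((2:ℝ)^(k+1)) ^ n * Real.exp (-(4^k) * a)‖ := by
        apply mul_le_mul_of_nonneg_right hk.le (norm_nonneg _)


lemma aux_cover {X : Type*} [MetricSpace X] (x : X) (s : ℝ) (hs : 0 < s) :
    (Set.univ : Set X) ⊆ ball x s ∪ ⋃ k : ℕ, (ball x (2^(k+1) * s) \ ball x (2^k * s)) := by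
  intro y _
  by_cases hy : dist y x < s
  · left; exact hy
  · right
    push_neg at hy
    have hd : 0 < dist y x := lt_of_lt_of_le hs hy
    have h1 : 1 ≤ dist y x / s := (one_le_div hs).2 hy
    set L := Real.logb 2 (dist y x / s) with hL
    have hlogb : 0 ≤ L := Real.logb_nonneg (by norm_num) h1
    set k := Nat.floor L with hk
    have hds : dist y x / s = 2 ^ L := (Real.rpow_logb (by norm_num) (by norm_num) (by positivity)).symm
    refine Set.mem_iUnion.2 ⟨k, ?_, ?_⟩
    · -- dist y x < 2^(k+1) * s
      have h2 : L < (k : ℝ) + 1 := Nat.lt_floor_add_one _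
      have : dist y x / s < 2 ^ ((k:ℝ)+1) := by
        rw [hds]; exact Real.rpow_lt_rpow_left_iff (by norm_num) |>.2 h2
      have h3 : ((2:ℝ) ^ ((k:ℝ)+1)) = 2^(k+1) := by
        rw [show ((k:ℝ)+1) = ((k+1 : ℕ) : ℝ) by push_cast; ring, Real.rpow_natCast]
      rw [h3] at this
      exact mem_ball.2 ((div_lt_iff₀ hs).1 this)
    · -- ¬ dist y x < 2^k * s
      have h2 : (k : ℝ) ≤ L := Nat.floor_le hlogb
      have : (2:ℝ) ^ ((k:ℝ)) ≤ dist y x / s := by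
        rw [hds]; exact Real.rpow_le_rpow_left_iff (by norm_num) |>.2 h2
      rw [Real.rpow_natCast] at this
      simp only [mem_ball, not_lt]
      exact (le_div_iff₀ hs).1 this



lemma aux_kernel {X : Type*} [MetricSpace X] [MeasurableSpace X] [OpensMeasurableSpace X]
    (μ : Measure X) (Cd n : ℝ)
    (hdoub : ∀ (x : X) (r lam : ℝ), 0 < r → 1 ≤ lam →
      μ (ball x (lam * r)) ≤ ENNReal.ofReal (Cd * lam ^ n) * μ (ball x r))
    (a : ℝ) (ha : 0 < a) (x : X) (s : ℝ) (hs : 0 < s) :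
    ∫⁻ y, ENNReal.ofReal (Real.exp (-(dist x y)^2 * a / s^2)) ∂μ ≤
      (1 + ∑' k : ℕ, ENNReal.ofReal (Cd * ((2:ℝ)^(k+1)) ^ n * Real.exp (-(4^k) * a)))
        * μ (ball x s) := by
  set f : X → ℝ≥0∞ := fun y => ENNReal.ofReal (Real.exp (-(dist x y)^2 * a / s^2)) with hf
  have hcov := aux_cover x s hs
  have hset : (ball x s ∪ ⋃ k : ℕ, (ball x (2^(k+1) * s) \ ball x (2^k * s))) = Set.univ :=
    Set.eq_univ_of_univ_subset hcov
  calc ∫⁻ y, f y ∂μ = ∫⁻ y in (ball x s ∪ ⋃ k : ℕ, (ball x (2^(k+1) * s) \ ball x (2^k * s))), f y ∂μ := by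
        rw [hset, setLIntegral_univ]
    _ ≤ (∫⁻ y in ball x s, f y ∂μ)
        + ∫⁻ y in ⋃ k : ℕ, (ball x (2^(k+1) * s) \ ball x (2^k * s)), f y ∂μ :=
        lintegral_union_le _ _ _
    _ ≤ (∫⁻ y in ball x s, f y ∂μ)
        + ∑' k : ℕ, ∫⁻ y in (ball x (2^(k+1) * s) \ ball x (2^k * s)), f y ∂μ := by
        gcongr
        exact lintegral_iUnion_le _ _
    _ ≤ 1 * μ (ball x s)
        + ∑' k : ℕ, ENNReal.ofReal (Cd * ((2:ℝ)^(k+1)) ^ n * Real.exp (-(4^k) * a)) * μ (ball x s) := by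
        gcongr with k
        · -- on the ball, f ≤ 1
          rw [← setLIntegral_const]
          apply setLIntegral_mono measurable_const
          intro y _
          simp only [hf, ← ENNReal.ofReal_one]
          apply ENNReal.ofReal_le_ofReal
          rw [Real.exp_le_one_iff, neg_mul, neg_div]
          have : 0 ≤ (dist x y)^2 * a / s^2 := by positivity
          linarith
        · -- on the annulus
          calc ∫⁻ y in (ball x (2^(k+1) * s) \ ball x (2^k * s)), f y ∂μ
              ≤ ∫⁻ _ in (ball x (2^(k+1) * s) \ ball x (2^k * s)),
                  ENNReal.ofReal (Real.exp (-(4^k) * a)) ∂μ := by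
                apply setLIntegral_mono measurable_const
                intro y hy
                apply ENNReal.ofReal_le_ofReal
                apply Real.exp_le_exp.2
                have hdy : 2^k * s ≤ dist x y := by
                  have := hy.2
                  simp only [mem_ball, not_lt, dist_comm] at this
                  exact this
                have h1 : (2:ℝ)^k * s ≥ 0 := by positivity
                have h2 : ((2:ℝ)^k * s)^2 ≤ (dist x y)^2 := by
                  apply sq_le_sq' (by linarith) hdy
                have h4 : ((2:ℝ)^k * s)^2 = 4^k * s^2 := by
                  rw [mul_pow]
                  congr 1
                  rw [← pow_mul, Nat.mul_comm, pow_mul]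
                  norm_num
                rw [neg_mul, neg_mul, neg_div, neg_le_neg_iff, le_div_iff₀ (by positivity)]
                nlinarith [h2, h4, ha.le]
              _ = ENNReal.ofReal (Real.exp (-(4^k) * a)) * μ (ball x (2^(k+1) * s) \ ball x (2^k * s)) :=
                setLIntegral_const _ _
              _ ≤ ENNReal.ofReal (Real.exp (-(4^k) * a)) * (ENNReal.ofReal (Cd * ((2:ℝ)^(k+1)) ^ n) * μ (ball x s)) := by
                gcongr
                calc μ (ball x (2^(k+1) * s) \ ball x (2^k * s)) ≤ μ (ball x (2^(k+1) * s)) :=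
                      measure_mono Set.diff_subset
                  _ ≤ ENNReal.ofReal (Cd * ((2:ℝ)^(k+1)) ^ n) * μ (ball x s) :=
                      hdoub x s (2^(k+1)) hs (one_le_pow₀ (by norm_num))
              _ = ENNReal.ofReal (Cd * ((2:ℝ)^(k+1)) ^ n * Real.exp (-(4^k) * a)) * μ (ball x s) := by
                rw [← mul_assoc, ← ENNReal.ofReal_mul (Real.exp_pos _).le, mul_comm (Real.exp _)]
    _ = (1 + ∑' k : ℕ, ENNReal.ofReal (Cd * ((2:ℝ)^(k+1)) ^ n * Real.exp (-(4^k) * a))) * μ (ball x s) := by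
        rw [ENNReal.tsum_mul_right, add_mul]



/-- On a space of homogeneous type with `μ(X) = ∞` and a
non-negative self-adjoint operator whose heat kernel obeys a Gaussian upper
bound, the spectral projection `E({0})` vanishes. Here `P` plays the role of
`E({0})`: it is an idempotent on `L²` whose range consists of functions fixed
by the heat semigroup, and the conclusion is `P = 0` on `L²`. -/
theorem stmt_10 {X : Type*} [MetricSpace X] [MeasurableSpace X] [OpensMeasurableSpace X]
    (μ : Measure X)
    (Cd n : ℝ)
    (hdoub : ∀ (x : X) (r lam : ℝ), 0 < r → 1 ≤ lam →
      μ (ball x (lam * r)) ≤ ENNReal.ofReal (Cd * lam ^ n) * μ (ball x r))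
    (hV : ∀ (x : X) (r : ℝ), 0 < r → 0 < μ (ball x r) ∧ μ (ball x r) < ∞)
    (hinf : μ Set.univ = ∞)
    -- heat kernels with Gaussian upper bounds
    (p : ℝ → X → X → ℝ) (Cg cg : ℝ) (hCg : 0 < Cg) (hcg : 0 < cg)
    (hgauss : ∀ t : ℝ, 0 < t → ∀ x y : X,
      |p t x y| ≤ Cg / (μ (ball x (Real.sqrt t))).toReal
        * Real.exp (-(dist x y) ^ 2 / (cg * t)))
    -- P = E({0}): an idempotent preserving L² whose range is fixed by e^{-tL}
    (P : (X → ℝ) → (X → ℝ))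
    (hmem : ∀ f, MemLp f 2 μ → MemLp (P f) 2 μ)
    (hidem : ∀ f, MemLp f 2 μ → P (P f) =ᵐ[μ] P f)
    (hfix : ∀ f, MemLp f 2 μ → ∀ t : ℝ, 0 < t →
      ∀ᵐ x ∂μ, ∫ y, p t x y * P f y ∂μ = P f x) :
    ∀ f, MemLp f 2 μ → P f =ᵐ[μ] 0 := by
  -- X is nonempty and Cd ≥ 0
  have hne : (Set.univ : Set X).Nonempty := by
    apply MeasureTheory.nonempty_of_measure_ne_zero (μ := μ)
    rw [hinf]; exact ENNReal.top_ne_zero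
  obtain ⟨x₀, -⟩ := hne
  have hCd : 0 ≤ Cd := by
    by_contra hCd
    push_neg at hCd
    have h1 := hdoub x₀ 1 1 one_pos le_rfl
    rw [one_mul, Real.one_rpow, mul_one, ENNReal.ofReal_eq_zero.2 hCd.le, zero_mul] at h1
    exact ((hV x₀ 1 one_pos).1.trans_le h1).false
  intro f hf
  set g := P f with hgdef
  have hg : MemLp g 2 μ := hmem f hf
  -- the constant K'
  set K' : ℝ≥0∞ :=
    1 + ∑' k : ℕ, ENNReal.ofReal (Cd * ((2:ℝ)^(k+1)) ^ n * Real.exp (-(4^k) * (2/cg))) with hK'def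
  have hK' : K' ≠ ∞ := by
    have hsum : Summable (fun k : ℕ => Cd * (((2:ℝ)^(k+1)) ^ n * Real.exp (-(4^k) * (2/cg)))) :=
      (aux_sum n (2/cg) (by positivity)).mul_left Cd
    rw [hK'def]
    simp_rw [mul_assoc]
    rw [← ENNReal.ofReal_tsum_of_nonneg (fun k => by positivity) hsum]
    exact (ENNReal.add_lt_top.2 ⟨ENNReal.one_lt_top, ENNReal.ofReal_lt_top⟩).ne
  -- L² norm of g as a lintegral
  set N2 : ℝ≥0∞ := ∫⁻ y, (‖g y‖₊ : ℝ≥0∞) ^ (2:ℝ) ∂μ with hN2def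
  have hN2 : N2 ≠ ∞ := by
    have h := hg.2
    rw [eLpNorm_eq_lintegral_rpow_enorm_toReal (by norm_num) (by norm_num)] at h
    have h2 : ((2:ℝ≥0∞).toReal) = (2:ℝ) := by norm_num
    rw [h2] at h
    have := (ENNReal.rpow_lt_top_iff_of_pos (by norm_num : (0:ℝ) < 1/2)).1 h
    exact this.ne
  -- the uniform constant M
  set M : ℝ≥0∞ := ENNReal.ofReal (Cg^2) * (K' * N2) with hMdef
  have hM : M ≠ ∞ := ENNReal.mul_ne_top ENNReal.ofReal_ne_top (ENNReal.mul_ne_top hK' hN2)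
  -- the key estimate, for each time t = k+1
  have key : ∀ k : ℕ, ∀ᵐ x ∂μ,
      (‖g x‖₊ : ℝ≥0∞) ^ (2:ℝ) * μ (ball x (Real.sqrt ((k:ℝ)+1))) ≤ M := by
    intro k
    have ht : (0:ℝ) < (k:ℝ)+1 := by positivity
    filter_upwards [hfix f hf ((k:ℝ)+1) ht] with x hx
    set t : ℝ := (k:ℝ)+1
    set s : ℝ := Real.sqrt t with hsdef
    have hs : 0 < s := Real.sqrt_pos.2 ht
    have hst : s^2 = t := Real.sq_sqrt ht.le
    set V : ℝ≥0∞ := μ (ball x s) with hVdef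
    obtain ⟨hV0, hVt⟩ := hV x s hs
    set Vr : ℝ := V.toReal with hVrdef
    have hVr : 0 < Vr := ENNReal.toReal_pos hV0.ne' hVt.ne
    set q : X → ℝ≥0∞ := fun y => ENNReal.ofReal (Cg / Vr * Real.exp (-(dist x y)^2 / (cg * t)))
      with hqdef
    have hqmeas : AEMeasurable q μ := by
      apply Continuous.aemeasurable
      apply ENNReal.continuous_ofReal.comp
      apply Continuous.mul continuous_const
      exact Real.continuous_exp.comp ((((continuous_const.dist continuous_id).pow 2).neg).div_const _)
    have hegmeas : AEMeasurable (fun y => (‖g y‖₊ : ℝ≥0∞)) μ := hg.1.enorm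
    -- Step A : pointwise bound via Cauchy-Schwarz
    have hA : (‖g x‖₊ : ℝ≥0∞) ≤
        (∫⁻ y, q y ^ (2:ℝ) ∂μ) ^ (1/2 : ℝ) * N2 ^ (1/2 : ℝ) := by
      calc (‖g x‖₊ : ℝ≥0∞) = ‖∫ y, p t x y * g y ∂μ‖₊ := by rw [hx]
        _ ≤ ∫⁻ y, ‖p t x y * g y‖₊ ∂μ := enorm_integral_le_lintegral_enorm _
        _ ≤ ∫⁻ y, (q * fun y => (‖g y‖₊ : ℝ≥0∞)) y ∂μ := by
            apply lintegral_mono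
            intro y
            simp only [Pi.mul_apply, nnnorm_mul, ENNReal.coe_mul]
            apply mul_le_mul_left
            rw [← enorm_eq_nnnorm, Real.enorm_eq_ofReal_abs]
            exact ENNReal.ofReal_le_ofReal (hgauss t ht x y)
        _ ≤ (∫⁻ y, q y ^ (2:ℝ) ∂μ) ^ (1/2 : ℝ) * (∫⁻ y, (‖g y‖₊ : ℝ≥0∞) ^ (2:ℝ) ∂μ) ^ (1/2 : ℝ) :=
            ENNReal.lintegral_mul_le_Lp_mul_Lq μ ⟨by norm_num, by norm_num, by norm_num⟩ hqmeas hegmeas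
    -- Step B : bound on ∫ q²
    have hB : (∫⁻ y, q y ^ (2:ℝ) ∂μ) ≤ ENNReal.ofReal ((Cg/Vr)^2) * (K' * V) := by
      have hpt : ∀ y : X, q y ^ (2:ℝ) =
          ENNReal.ofReal ((Cg/Vr)^2) * ENNReal.ofReal (Real.exp (-(dist x y)^2 * (2/cg) / s^2)) := by
        intro y
        simp only [hqdef]
        rw [ENNReal.ofReal_mul (by positivity), ENNReal.mul_rpow_of_nonneg _ _ (by norm_num)]
        congr 1
        · rw [ENNReal.ofReal_rpow_of_nonneg (by positivity) (by norm_num), Real.rpow_two]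
        · rw [ENNReal.ofReal_rpow_of_nonneg (Real.exp_pos _).le (by norm_num), Real.rpow_two,
            sq, ← Real.exp_add]
          congr 1
          rw [hst]
          field_simp
          ring
      calc (∫⁻ y, q y ^ (2:ℝ) ∂μ)
          = ENNReal.ofReal ((Cg/Vr)^2) *
            ∫⁻ y, ENNReal.ofReal (Real.exp (-(dist x y)^2 * (2/cg) / s^2)) ∂μ := by
            simp_rw [hpt]
            exact lintegral_const_mul' _ _ ENNReal.ofReal_ne_top
        _ ≤ ENNReal.ofReal ((Cg/Vr)^2) * (K' * V) := by
            gcongr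
            exact aux_kernel μ Cd n hdoub (2/cg) (by positivity) x s hs
    -- combine
    have hVV : ENNReal.ofReal ((Cg/Vr)^2) * (V * V) = ENNReal.ofReal (Cg^2) := by
      have hV' : ENNReal.ofReal Vr = V := ENNReal.ofReal_toReal hVt.ne
      rw [div_pow, ENNReal.ofReal_div_of_pos (by positivity), sq Vr,
        ENNReal.ofReal_mul hVr.le, hV', ENNReal.div_mul_cancel (mul_ne_zero hV0.ne' hV0.ne') (ENNReal.mul_ne_top hVt.ne hVt.ne)]
    calc (‖g x‖₊ : ℝ≥0∞) ^ (2:ℝ) * μ (ball x (Real.sqrt ((k:ℝ)+1)))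
        = (‖g x‖₊ : ℝ≥0∞) ^ (2:ℝ) * V := rfl
      _ ≤ ((∫⁻ y, q y ^ (2:ℝ) ∂μ) ^ (1/2 : ℝ) * N2 ^ (1/2 : ℝ)) ^ (2:ℝ) * V := by
          gcongr
      _ = (∫⁻ y, q y ^ (2:ℝ) ∂μ) * N2 * V := by
          rw [ENNReal.mul_rpow_of_nonneg _ _ (by norm_num : (0:ℝ) ≤ 2),
            ← ENNReal.rpow_mul, ← ENNReal.rpow_mul]
          norm_num
      _ ≤ (ENNReal.ofReal ((Cg/Vr)^2) * (K' * V)) * N2 * V := by gcongr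
      _ = ENNReal.ofReal ((Cg/Vr)^2) * (V * V) * (K' * N2) := by ring
      _ = M := by rw [hVV]
  -- conclusion
  have keyall : ∀ᵐ x ∂μ, ∀ k : ℕ,
      (‖g x‖₊ : ℝ≥0∞) ^ (2:ℝ) * μ (ball x (Real.sqrt ((k:ℝ)+1))) ≤ M := ae_all_iff.2 key
  filter_upwards [keyall] with x hx
  show g x = 0
  by_contra h0
  have hne2 : (‖g x‖₊ : ℝ≥0∞) ^ (2:ℝ) ≠ 0 := by
    simp [ENNReal.rpow_eq_zero_iff, h0]
  have hfin2 : (‖g x‖₊ : ℝ≥0∞) ^ (2:ℝ) ≠ ∞ := by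
    apply ENNReal.rpow_ne_top_of_nonneg (by norm_num)
    exact ENNReal.coe_ne_top
  have hble : ∀ k : ℕ, μ (ball x (Real.sqrt ((k:ℝ)+1))) ≤ M / (‖g x‖₊ : ℝ≥0∞) ^ (2:ℝ) := by
    intro k
    rw [ENNReal.le_div_iff_mul_le (Or.inl hne2) (Or.inl hfin2), mul_comm]
    exact hx k
  have hmono : Monotone (fun k : ℕ => ball x (Real.sqrt ((k:ℝ)+1))) := by
    intro i j hij
    apply ball_subset_ball
    apply Real.sqrt_le_sqrt
    have : (i:ℝ) ≤ (j:ℝ) := Nat.cast_le.2 hij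
    linarith
  have huniv : (⋃ k : ℕ, ball x (Real.sqrt ((k:ℝ)+1))) = Set.univ := by
    apply Set.eq_univ_of_forall
    intro y
    obtain ⟨k, hk⟩ := exists_nat_ge ((dist y x)^2)
    refine Set.mem_iUnion.2 ⟨k, ?_⟩
    rw [mem_ball]
    have : (dist y x)^2 < (k:ℝ)+1 := by linarith
    exact (Real.lt_sqrt dist_nonneg).2 this
  have : μ Set.univ ≤ M / (‖g x‖₊ : ℝ≥0∞) ^ (2:ℝ) := by
    rw [← huniv, (hmono.directed_le).measure_iUnion]
    exact iSup_le hble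
  rw [hinf] at this
  exact (lt_of_le_of_lt this (ENNReal.div_lt_top hM hne2)).false
end

section
/- Let (X, ρ, μ) be a space of homogeneous type with μ(X) = ∞ and let L be a non-negative self-adjoint operator on L²(X) with Gaussian heat kernel bounds. If f ∈ L²(X) satisfies e^{-tL}f = f for all t > 0, then f = 0. -/
open MeasureTheory Metric Filter
open scoped ENNReal NNReal


private lemma summable_aux (Cd n c : ℝ) (hCd : 0 < Cd) (hc : 0 < c) :
    Summable (fun j : ℕ => Cd * ((2:ℝ) ^ (j+1)) ^ n * Real.exp (-(4:ℝ) ^ j / c)) := by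
  set a : ℕ → ℝ := fun j => Cd * ((2:ℝ) ^ (j+1)) ^ n * Real.exp (-(4:ℝ) ^ j / c) with ha
  have hpos : ∀ j : ℕ, 0 < a j := by
    intro j
    have h2 : (0:ℝ) < (2:ℝ) ^ (j+1) := by positivity
    have := Real.rpow_pos_of_pos h2 n
    positivity
  have key : ∀ j : ℕ, ‖a (j+1)‖ / ‖a j‖ = (2:ℝ) ^ n * Real.exp (-(3 * 4 ^ j) / c) := by
    intro j
    rw [Real.norm_eq_abs, Real.norm_eq_abs, abs_of_pos (hpos _), abs_of_pos (hpos _),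
      div_eq_iff (hpos j).ne']
    have h2j : (0:ℝ) < (2:ℝ) ^ (j+1) := by positivity
    have e1 : (2:ℝ) ^ n * ((2:ℝ) ^ (j+1)) ^ n = ((2:ℝ) ^ (j+2)) ^ n := by
      rw [← Real.mul_rpow (by norm_num) h2j.le]
      congr 1
      ring
    have e2 : Real.exp (-(3 * 4 ^ j) / c) * Real.exp (-(4:ℝ) ^ j / c)
        = Real.exp (-(4:ℝ) ^ (j+1) / c) := by
      rw [← Real.exp_add]
      congr 1
      rw [pow_succ]
      ring
    simp only [ha]
    calc Cd * ((2:ℝ) ^ (j+1+1)) ^ n * Real.exp (-(4:ℝ) ^ (j+1) / c)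
        = Cd * ((2:ℝ) ^ n * ((2:ℝ) ^ (j+1)) ^ n)
          * (Real.exp (-(3 * 4 ^ j) / c) * Real.exp (-(4:ℝ) ^ j / c)) := by
          rw [e1, e2]
      _ = (2:ℝ) ^ n * Real.exp (-(3 * 4 ^ j) / c)
          * (Cd * ((2:ℝ) ^ (j+1)) ^ n * Real.exp (-(4:ℝ) ^ j / c)) := by ring
  have hlim : Tendsto (fun j : ℕ => ‖a (j+1)‖ / ‖a j‖) atTop (nhds 0) := by
    have h4 : Tendsto (fun j : ℕ => (4:ℝ) ^ j) atTop atTop :=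
      tendsto_pow_atTop_atTop_of_one_lt (by norm_num)
    have h5 : Tendsto (fun j : ℕ => (3 / c) * (4:ℝ) ^ j) atTop atTop :=
      h4.const_mul_atTop (by positivity)
    have h6 : Tendsto (fun j : ℕ => -((3 / c) * (4:ℝ) ^ j)) atTop atBot :=
      tendsto_neg_atTop_atBot.comp h5
    have h7 : Tendsto (fun j : ℕ => Real.exp (-((3 / c) * (4:ℝ) ^ j))) atTop (nhds 0) :=
      Real.tendsto_exp_atBot.comp h6
    have h8 : Tendsto (fun j : ℕ => (2:ℝ) ^ n * Real.exp (-((3 / c) * (4:ℝ) ^ j)))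
        atTop (nhds ((2:ℝ) ^ n * 0)) := h7.const_mul _
    rw [mul_zero] at h8
    refine Tendsto.congr (fun j => ?_) h8
    rw [key j]
    congr 2
    ring
  exact summable_of_ratio_test_tendsto_lt_one zero_lt_one
    (Eventually.of_forall fun j => (hpos j).ne') hlim


set_option maxHeartbeats 1000000 in
private lemma annuli_bound {X : Type*} [MetricSpace X] [MeasurableSpace X] [OpensMeasurableSpace X]
    (μ : Measure X) (Cd n : ℝ)
    (hdoub : ∀ (x : X) (r lam : ℝ), 0 < r → 1 ≤ lam →
      μ (ball x (lam * r)) ≤ ENNReal.ofReal (Cd * lam ^ n) * μ (ball x r))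
    (c : ℝ) (hc : 0 < c) (x : X) (t : ℝ) (ht : 0 < t) :
    ∫⁻ y, ENNReal.ofReal (Real.exp (-(dist x y) ^ 2 / (c * t))) ∂μ ≤
      (1 + ∑' j : ℕ, ENNReal.ofReal (Cd * ((2:ℝ) ^ (j+1)) ^ n * Real.exp (-(4:ℝ) ^ j / c)))
        * μ (ball x (Real.sqrt t)) := by
  set s := Real.sqrt t with hs
  have hs0 : 0 < s := Real.sqrt_pos.mpr ht
  have hst : s ^ 2 = t := Real.sq_sqrt ht.le
  set g : X → ℝ≥0∞ := fun y => ENNReal.ofReal (Real.exp (-(dist x y) ^ 2 / (c * t))) with hg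
  set A : ℕ → Set X := fun j => ball x ((2:ℝ) ^ (j+1) * s) \ ball x ((2:ℝ) ^ j * s) with hA
  have hcover : Set.univ ⊆ ball x s ∪ ⋃ j, A j := by
    intro y _
    by_cases hy : dist y x < s
    · exact Or.inl hy
    · push_neg at hy
      set d := dist y x with hd
      have hd1 : (1:ℝ) ≤ d / s := (one_le_div hs0).mpr hy
      have hm1 : 1 ≤ ⌊d / s⌋₊ := Nat.le_floor (by exact_mod_cast hd1)
      set k := Nat.log 2 ⌊d / s⌋₊ with hk
      have h1 : (2:ℝ) ^ k ≤ d / s := by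
        calc (2:ℝ) ^ k = ((2 ^ k : ℕ) : ℝ) := by push_cast; ring
          _ ≤ (⌊d / s⌋₊ : ℝ) := by
              exact_mod_cast Nat.pow_log_le_self 2 (by omega)
          _ ≤ d / s := Nat.floor_le (by positivity)
      have h2 : d / s < (2:ℝ) ^ (k+1) := by
        have := Nat.lt_pow_succ_log_self (by norm_num : 1 < 2) ⌊d / s⌋₊
        calc d / s < (⌊d / s⌋₊ : ℝ) + 1 := Nat.lt_floor_add_one _
          _ ≤ ((2 ^ (k+1) : ℕ) : ℝ) := by exact_mod_cast this
          _ = (2:ℝ) ^ (k+1) := by push_cast; ring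
      refine Or.inr (Set.mem_iUnion.mpr ⟨k, ?_, ?_⟩)
      · exact mem_ball'.mpr (by rw [dist_comm]; exact (div_lt_iff₀ hs0).mp h2)
      · intro hmem
        have h3 : d < (2:ℝ) ^ k * s := by
          have := mem_ball'.mp hmem
          rwa [dist_comm] at this
        exact absurd h3 (not_lt.mpr ((le_div_iff₀ hs0).mp h1))
  have hb0 : ∫⁻ y in ball x s, g y ∂μ ≤ μ (ball x s) := by
    calc ∫⁻ y in ball x s, g y ∂μ ≤ ∫⁻ _ in ball x s, 1 ∂μ := by
          refine setLIntegral_mono measurable_const fun y _ => ?_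
          simp only [hg]
          rw [show (1:ℝ≥0∞) = ENNReal.ofReal 1 by simp]
          apply ENNReal.ofReal_le_ofReal
          rw [Real.exp_le_one_iff]
          have h0 : (0:ℝ) < c * t := by positivity
          exact div_nonpos_of_nonpos_of_nonneg (neg_nonpos.mpr (sq_nonneg _)) h0.le
      _ = μ (ball x s) := by rw [setLIntegral_const, one_mul]
  have hbd : ∀ j : ℕ, ∫⁻ y in A j, g y ∂μ ≤
      ENNReal.ofReal (Cd * ((2:ℝ) ^ (j+1)) ^ n * Real.exp (-(4:ℝ) ^ j / c)) * μ (ball x s) := by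
    intro j
    have hsub : A j ⊆ ball x ((2:ℝ) ^ (j+1) * s) := Set.diff_subset
    have hgle : ∀ y ∈ A j, g y ≤ ENNReal.ofReal (Real.exp (-(4:ℝ) ^ j / c)) := by
      intro y hy
      have hy2 : ¬ (y ∈ ball x ((2:ℝ) ^ j * s)) := hy.2
      have hdist : (2:ℝ) ^ j * s ≤ dist x y := by
        rw [dist_comm]
        exact not_lt.mp (fun h => hy2 (mem_ball'.mpr (by rwa [dist_comm])))
      apply ENNReal.ofReal_le_ofReal
      apply Real.exp_le_exp.mpr
      have h1 : ((2:ℝ) ^ j * s) ^ 2 ≤ (dist x y) ^ 2 :=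
        pow_le_pow_left₀ (by positivity) hdist 2
      have h2 : ((2:ℝ) ^ j * s) ^ 2 = (4:ℝ) ^ j * t := by
        rw [mul_pow, hst, ← pow_mul, show j * 2 = 2 * j by ring, pow_mul]
        norm_num
      have hle : (4:ℝ) ^ j * t ≤ (dist x y) ^ 2 := by rw [← h2]; exact h1
      rw [div_le_div_iff₀ (by positivity) (by positivity)]
      nlinarith [hc.le, ht.le]
    calc ∫⁻ y in A j, g y ∂μ
        ≤ ∫⁻ _ in A j, ENNReal.ofReal (Real.exp (-(4:ℝ) ^ j / c)) ∂μ :=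
          setLIntegral_mono measurable_const hgle
      _ = ENNReal.ofReal (Real.exp (-(4:ℝ) ^ j / c)) * μ (A j) := setLIntegral_const _ _
      _ ≤ ENNReal.ofReal (Real.exp (-(4:ℝ) ^ j / c)) * μ (ball x ((2:ℝ) ^ (j+1) * s)) :=
          mul_le_mul_right (measure_mono hsub) _
      _ ≤ ENNReal.ofReal (Real.exp (-(4:ℝ) ^ j / c))
          * (ENNReal.ofReal (Cd * ((2:ℝ) ^ (j+1)) ^ n) * μ (ball x s)) :=
          mul_le_mul_right (hdoub x s ((2:ℝ) ^ (j+1)) hs0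
            (by simpa using pow_le_pow_right₀ (by norm_num : (1:ℝ) ≤ 2) (Nat.zero_le (j+1)))) _
      _ = ENNReal.ofReal (Cd * ((2:ℝ) ^ (j+1)) ^ n * Real.exp (-(4:ℝ) ^ j / c))
          * μ (ball x s) := by
          rw [← mul_assoc, ← ENNReal.ofReal_mul (Real.exp_nonneg _), mul_comm (Real.exp _)]
  calc ∫⁻ y, g y ∂μ = ∫⁻ y in Set.univ, g y ∂μ := (setLIntegral_univ _).symm
    _ ≤ ∫⁻ y in ball x s ∪ ⋃ j, A j, g y ∂μ := lintegral_mono_set hcover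
    _ ≤ ∫⁻ y in ball x s, g y ∂μ + ∫⁻ y in ⋃ j, A j, g y ∂μ := lintegral_union_le _ _ _
    _ ≤ μ (ball x s) + ∑' j, ∫⁻ y in A j, g y ∂μ :=
        add_le_add hb0 (lintegral_iUnion_le _ _)
    _ ≤ μ (ball x s)
        + (∑' j : ℕ, ENNReal.ofReal (Cd * ((2:ℝ) ^ (j+1)) ^ n * Real.exp (-(4:ℝ) ^ j / c)))
          * μ (ball x s) := by
        rw [← ENNReal.tsum_mul_right]
        exact add_le_add_right (ENNReal.tsum_le_tsum hbd) _
    _ = (1 + ∑' j : ℕ, ENNReal.ofReal (Cd * ((2:ℝ) ^ (j+1)) ^ n * Real.exp (-(4:ℝ) ^ j / c)))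
        * μ (ball x s) := by rw [add_mul, one_mul]



set_option maxHeartbeats 1000000 in
/-- On a space of homogeneous type with `μ(X) = ∞`, if the heat
semigroup (given by kernels `p_t` with Gaussian upper bounds) fixes
`f ∈ L²(X)`, i.e. `e^{-tL}f = f` for all `t > 0`, then `f = 0`. -/
theorem stmt_11 {X : Type*} [MetricSpace X] [MeasurableSpace X] [OpensMeasurableSpace X]
    (μ : Measure X)
    -- space of homogeneous type: doubling, balls of finite positive measure
    (Cd n : ℝ)
    (hdoub : ∀ (x : X) (r lam : ℝ), 0 < r → 1 ≤ lam →
      μ (ball x (lam * r)) ≤ ENNReal.ofReal (Cd * lam ^ n) * μ (ball x r))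
    (hV : ∀ (x : X) (r : ℝ), 0 < r → 0 < μ (ball x r) ∧ μ (ball x r) < ∞)
    -- infinite total measure
    (hinf : μ Set.univ = ∞)
    -- heat kernels with Gaussian upper bounds
    (p : ℝ → X → X → ℝ) (Cg cg : ℝ) (hCg : 0 < Cg) (hcg : 0 < cg)
    (hgauss : ∀ t : ℝ, 0 < t → ∀ x y : X,
      |p t x y| ≤ Cg / (μ (ball x (Real.sqrt t))).toReal
        * Real.exp (-(dist x y) ^ 2 / (cg * t)))
    -- f ∈ L² is fixed by the heat semigroup
    (f : X → ℝ) (hf : MemLp f 2 μ)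
    (hfix : ∀ t : ℝ, 0 < t → ∀ᵐ x ∂μ, ∫ y, p t x y * f y ∂μ = f x) :
    f =ᵐ[μ] 0 := by
  -- X nonempty
  have hX : Nonempty X := by
    by_contra h
    rw [not_nonempty_iff] at h
    rw [Set.univ_eq_empty_iff.mpr h, measure_empty] at hinf
    exact ENNReal.zero_ne_top hinf
  obtain ⟨x₀⟩ := hX
  -- Cd > 0
  have hCd : 0 < Cd := by
    by_contra h
    push_neg at h
    have h1 := hdoub x₀ 1 1 one_pos le_rfl
    rw [one_mul, Real.one_rpow, mul_one, ENNReal.ofReal_eq_zero.mpr h, zero_mul] at h1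
    exact absurd (le_antisymm h1 zero_le) (hV x₀ 1 one_pos).1.ne'
  set c : ℝ := cg / 2 with hc'
  have hc : 0 < c := by positivity
  set a : ℕ → ℝ := fun j => Cd * ((2:ℝ) ^ (j+1)) ^ n * Real.exp (-(4:ℝ) ^ j / c) with ha
  have hsum : Summable a := summable_aux Cd n c hCd hc
  set T : ℝ≥0∞ := 1 + ∑' j : ℕ, ENNReal.ofReal (a j) with hT
  have hTne : T ≠ ∞ := by
    rw [hT, ← ENNReal.ofReal_tsum_of_nonneg (fun j => ?_) hsum]
    · exact (ENNReal.add_lt_top.mpr ⟨ENNReal.one_lt_top, ENNReal.ofReal_lt_top⟩).ne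
    · have h2 : (0:ℝ) < (2:ℝ) ^ (j+1) := by positivity
      have := Real.rpow_pos_of_pos h2 n
      positivity
  set M : ℝ≥0∞ := eLpNorm f 2 μ with hM
  have hMne : M ≠ ∞ := hf.2.ne
  have hae : ∀ᵐ x ∂μ, ∀ m : ℕ, ∫ y, p ((m:ℝ)+1) x y * f y ∂μ = f x :=
    ae_all_iff.mpr fun m => hfix ((m:ℝ)+1) (by positivity)
  filter_upwards [hae] with x hx
  show f x = 0
  by_contra hfx
  set ε : ℝ≥0∞ := ENNReal.ofReal |f x| with hε'
  have hε : 0 < ε := ENNReal.ofReal_pos.mpr (abs_pos.mpr hfx)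
  set A : ℝ≥0∞ := ENNReal.ofReal Cg * T ^ (1/2 : ℝ) * M with hA'
  have hAne : A ≠ ∞ :=
    ENNReal.mul_ne_top (ENNReal.mul_ne_top ENNReal.ofReal_ne_top
      (ENNReal.rpow_ne_top_of_nonneg (by norm_num) hTne)) hMne
  -- key estimate for each m
  have key : ∀ m : ℕ, μ (ball x (Real.sqrt ((m:ℝ)+1))) ≤ (A / ε) ^ 2 := by
    intro m
    set t : ℝ := (m:ℝ) + 1 with ht'
    have ht : 0 < t := by positivity
    set V : ℝ≥0∞ := μ (ball x (Real.sqrt t)) with hV'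
    obtain ⟨hV0, hV1⟩ := hV x (Real.sqrt t) (Real.sqrt_pos.mpr ht)
    set G : X → ℝ≥0∞ := fun y => ENNReal.ofReal (Real.exp (-(dist x y) ^ 2 / (cg * t))) with hG
    set F : X → ℝ≥0∞ := fun y => (‖f y‖₊ : ℝ≥0∞) with hF
    have hGmeas : Measurable G := by
      apply Measurable.ennreal_ofReal
      exact (Real.continuous_exp.comp
        (((continuous_const.dist continuous_id).pow 2).neg.div_const _)).measurable
    have hFaem : AEMeasurable F μ := hf.aestronglyMeasurable.enorm
    have hCV0 : 0 ≤ Cg / V.toReal := div_nonneg hCg.le ENNReal.toReal_nonneg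
    -- Step A: ε ≤ ofReal(Cg/V.toReal) * ∫⁻ G*F
    have stepA : ε ≤ ENNReal.ofReal (Cg / V.toReal) * ∫⁻ y, G y * F y ∂μ := by
      calc ε = (‖f x‖₊ : ℝ≥0∞) := (Real.enorm_eq_ofReal_abs _).symm
        _ = (‖∫ y, p t x y * f y ∂μ‖₊ : ℝ≥0∞) := by rw [hx m]
        _ ≤ ∫⁻ y, (‖p t x y * f y‖₊ : ℝ≥0∞) ∂μ := enorm_integral_le_lintegral_enorm _
        _ ≤ ∫⁻ y, ENNReal.ofReal (Cg / V.toReal) * (G y * F y) ∂μ := by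
            refine lintegral_mono fun y => ?_
            rw [nnnorm_mul, ENNReal.coe_mul, ← mul_assoc]
            refine mul_le_mul_left ?_ _
            calc (‖p t x y‖₊ : ℝ≥0∞) = ENNReal.ofReal |p t x y| :=
                Real.enorm_eq_ofReal_abs _
              _ ≤ ENNReal.ofReal (Cg / V.toReal * Real.exp (-(dist x y) ^ 2 / (cg * t))) :=
                ENNReal.ofReal_le_ofReal (hgauss t ht x y)
              _ = ENNReal.ofReal (Cg / V.toReal) * G y := ENNReal.ofReal_mul hCV0
        _ = ENNReal.ofReal (Cg / V.toReal) * ∫⁻ y, G y * F y ∂μ :=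
            lintegral_const_mul' _ _ ENNReal.ofReal_ne_top
    -- Step B: Hölder
    have stepB : ∫⁻ y, G y * F y ∂μ ≤
        (∫⁻ y, G y ^ (2:ℝ) ∂μ) ^ (1/2 : ℝ) * (∫⁻ y, F y ^ (2:ℝ) ∂μ) ^ (1/2 : ℝ) :=
      ENNReal.lintegral_mul_le_Lp_mul_Lq μ ((Real.holderConjugate_iff_eq_conjExponent one_lt_two).mpr (by norm_num))
        hGmeas.aemeasurable hFaem
    -- Step C: second factor is eLpNorm
    have stepC : (∫⁻ y, F y ^ (2:ℝ) ∂μ) ^ (1/2 : ℝ) = M := by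
      rw [hM, eLpNorm_eq_lintegral_rpow_enorm_toReal two_ne_zero ENNReal.ofNat_ne_top]
      norm_num
      rfl
    -- Step D: first factor via annuli bound
    have stepD : ∫⁻ y, G y ^ (2:ℝ) ∂μ ≤ T * V := by
      have heq : ∀ y : X, G y ^ (2:ℝ) =
          ENNReal.ofReal (Real.exp (-(dist x y) ^ 2 / (c * t))) := by
        intro y
        show (ENNReal.ofReal (Real.exp (-(dist x y) ^ 2 / (cg * t)))) ^ (2:ℝ) = _
        rw [ENNReal.ofReal_rpow_of_pos (Real.exp_pos _), ← Real.exp_mul]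
        congr 1
        rw [hc']
        field_simp
      calc ∫⁻ y, G y ^ (2:ℝ) ∂μ
          = ∫⁻ y, ENNReal.ofReal (Real.exp (-(dist x y) ^ 2 / (c * t))) ∂μ := by
            exact lintegral_congr heq
        _ ≤ T * V := annuli_bound μ Cd n hdoub c hc x t ht
    -- combine
    have main : ε ≤ ENNReal.ofReal Cg / V * (T ^ (1/2:ℝ) * (V ^ (1/2:ℝ) * M)) := by
      have h1 : ENNReal.ofReal (Cg / V.toReal) = ENNReal.ofReal Cg / V := by
        rw [ENNReal.ofReal_div_of_pos (ENNReal.toReal_pos hV0.ne' hV1.ne),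
          ENNReal.ofReal_toReal hV1.ne]
      have h2 : (∫⁻ y, G y ^ (2:ℝ) ∂μ) ^ (1/2:ℝ) ≤ T ^ (1/2:ℝ) * V ^ (1/2:ℝ) := by
        rw [← ENNReal.mul_rpow_of_nonneg _ _ (by norm_num : (0:ℝ) ≤ 1/2)]
        exact ENNReal.rpow_le_rpow stepD (by norm_num)
      calc ε ≤ ENNReal.ofReal (Cg / V.toReal) * ∫⁻ y, G y * F y ∂μ := stepA
        _ ≤ ENNReal.ofReal (Cg / V.toReal) *
            ((∫⁻ y, G y ^ (2:ℝ) ∂μ) ^ (1/2:ℝ) * (∫⁻ y, F y ^ (2:ℝ) ∂μ) ^ (1/2:ℝ)) :=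
            mul_le_mul_right stepB _
        _ = ENNReal.ofReal Cg / V * ((∫⁻ y, G y ^ (2:ℝ) ∂μ) ^ (1/2:ℝ) * M) := by
            rw [h1, stepC]
        _ ≤ ENNReal.ofReal Cg / V * (T ^ (1/2:ℝ) * V ^ (1/2:ℝ) * M) := by
            exact mul_le_mul_right (mul_le_mul_left h2 _) _
        _ = ENNReal.ofReal Cg / V * (T ^ (1/2:ℝ) * (V ^ (1/2:ℝ) * M)) := by
            rw [mul_assoc]
    -- from main: ε * V^(1/2) ≤ A
    have hVh0 : V ^ (1/2:ℝ) ≠ 0 := by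
      simp only [ne_eq, ENNReal.rpow_eq_zero_iff, not_or]
      constructor
      · rintro ⟨h, -⟩; exact hV0.ne' h
      · rintro ⟨h, -⟩; exact hV1.ne h
    have hVhne : V ^ (1/2:ℝ) ≠ ∞ := ENNReal.rpow_ne_top_of_nonneg (by norm_num) hV1.ne
    have hmul : ε * V ≤ A * V ^ (1/2:ℝ) := by
      have := mul_le_mul_left main V
      calc ε * V ≤ ENNReal.ofReal Cg / V * (T ^ (1/2:ℝ) * (V ^ (1/2:ℝ) * M)) * V := this
        _ = ENNReal.ofReal Cg * (T ^ (1/2:ℝ) * (V ^ (1/2:ℝ) * M)) * (V⁻¹ * V) := by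
            rw [div_eq_mul_inv]; ring
        _ = ENNReal.ofReal Cg * (T ^ (1/2:ℝ) * (V ^ (1/2:ℝ) * M)) := by
            rw [ENNReal.inv_mul_cancel hV0.ne' hV1.ne, mul_one]
        _ = A * V ^ (1/2:ℝ) := by rw [hA']; ring
    have hVsplit : V = V ^ (1/2:ℝ) * V ^ (1/2:ℝ) := by
      rw [← ENNReal.rpow_add _ _ hV0.ne' hV1.ne]
      norm_num
      rfl
    have hcancel : ε * V ^ (1/2:ℝ) ≤ A := by
      have h3 : ε * V ^ (1/2:ℝ) * V ^ (1/2:ℝ) ≤ A * V ^ (1/2:ℝ) := by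
        calc ε * V ^ (1/2:ℝ) * V ^ (1/2:ℝ) = ε * V := by rw [mul_assoc, ← hVsplit]
          _ ≤ A * V ^ (1/2:ℝ) := hmul
      exact (ENNReal.mul_le_mul_iff_left hVh0 hVhne).mp h3
    have hdiv : V ^ (1/2:ℝ) ≤ A / ε := by
      rw [ENNReal.le_div_iff_mul_le (Or.inl hε.ne') (Or.inl (by
        rw [hε']; exact ENNReal.ofReal_ne_top))]
      rw [mul_comm]
      exact hcancel
    calc μ (ball x (Real.sqrt ((m:ℝ)+1))) = V := rfl
      _ = (V ^ (1/2:ℝ)) ^ 2 := by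
          rw [← ENNReal.rpow_natCast (V ^ (1/2:ℝ)) 2, ← ENNReal.rpow_mul]
          norm_num
      _ ≤ (A / ε) ^ 2 := pow_le_pow_left₀ zero_le hdiv 2
  -- contradiction with infinite measure
  have hballs : ∀ k : ℕ, μ (ball x k) ≤ (A / ε) ^ 2 := by
    intro k
    have hr : Real.sqrt (((k^2 + 2*k : ℕ):ℝ) + 1) = (k:ℝ) + 1 := by
      rw [show ((k^2 + 2*k : ℕ):ℝ) + 1 = ((k:ℝ)+1)^2 by push_cast; ring,
        Real.sqrt_sq (by positivity)]
    calc μ (ball x k) ≤ μ (ball x (Real.sqrt (((k^2 + 2*k : ℕ):ℝ) + 1))) := by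
          apply measure_mono (ball_subset_ball _)
          rw [hr]; linarith
      _ ≤ (A / ε) ^ 2 := key _
  have hmono : Monotone (fun k : ℕ => ball x (k:ℝ)) :=
    fun k l hkl => ball_subset_ball (Nat.cast_le.mpr hkl)
  have hdir : Directed (· ⊆ ·) (fun k : ℕ => ball x (k:ℝ)) := hmono.directed_le
  have htop : μ Set.univ ≤ (A / ε) ^ 2 := by
    rw [← iUnion_ball_nat x, hdir.measure_iUnion]
    exact iSup_le hballs
  rw [hinf] at htop
  have hfin : (A / ε) ^ 2 < ∞ :=
    ENNReal.pow_lt_top (ENNReal.div_lt_top hAne hε.ne')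
  exact absurd (top_le_iff.mp htop) hfin.ne
end
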